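/- Let A > 0, B ∈ ℝ, R ≥ 0 with 4|B|R ≤ π and 0 ≤ R ≤ π/(2√(4B² + A²)), and let a₁(k) = 1 + A² e^{4ikR} / (4(k² − B²)) for complex k ≠ ±B. Then a₁ has no zeros k with Im k > 0 and Re k ≠ 0 (i.e., all zeros of a₁ in the open upper half-plane lie on the imaginary axis). -/
import Mathlib

/-- If `t * sin t < 0` then `π < |t|`. -/
lemma aux_pi_lt_abs (t : ℝ) (h : t * Real.sin t < 0) : Real.pi < |t| := by
  by_contra hle
  push_neg at hle
  rcases le_or_gt 0 t with ht | ht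
  · have hs : 0 ≤ Real.sin t :=
      Real.sin_nonneg_of_nonneg_of_le_pi ht ((le_abs_self t).trans hle)
    nlinarith
  · have hs : Real.sin t ≤ 0 := by
      have h1 : 0 ≤ Real.sin (-t) :=
        Real.sin_nonneg_of_nonneg_of_le_pi (by linarith) ((neg_le_abs t).trans hle)
      rw [Real.sin_neg] at h1; linarith
    nlinarith

set_option maxHeartbeats 2000000 in
/-- If `4|B|R ≤ π` and `0 ≤ R ≤ π/(2√(4B² + A²))`, then
`a₁(k) = 1 + A²e^{4ikR}/(4(k² − B²))` has no zeros `k` with `Im k > 0` and `Re k ≠ 0`. -/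
theorem a1_no_offaxis_zeros (A B R : ℝ) (hA : 0 < A) (hR : 0 ≤ R)
    (hBR : 4 * |B| * R ≤ Real.pi)
    (hRle : R ≤ Real.pi / (2 * Real.sqrt (4 * B ^ 2 + A ^ 2)))
    (a₁ : ℂ → ℂ)
    (ha₁ : ∀ k : ℂ, a₁ k =
      1 + (A : ℂ) ^ 2 * Complex.exp (4 * Complex.I * k * (R : ℂ)) / (4 * (k ^ 2 - (B : ℂ) ^ 2))) :
    ∀ k : ℂ, 0 < k.im → k.re ≠ 0 → a₁ k ≠ 0 := by
  intro k hy hx h0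
  rw [ha₁ k] at h0
  set x := k.re with hxdef
  set y := k.im with hydef
  have hne : k ^ 2 - (B:ℂ) ^ 2 ≠ 0 := by
    intro h; rw [h] at h0; simp at h0
  have key : (A:ℂ)^2 * Complex.exp (4*Complex.I*k*(R:ℂ)) = -(4*(k^2 - (B:ℂ)^2)) := by
    field_simp at h0
    linear_combination h0
  have hz : 4*Complex.I*k*(R:ℂ) = (↑(-(4*R*y)) + ↑(4*R*x)*Complex.I : ℂ) := by
    apply Complex.ext <;> simp <;> ring
  rw [hz] at key
  have him := congrArg Complex.im key
  have hre := congrArg Complex.re key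
  simp [Complex.exp_re, Complex.exp_im, Complex.mul_re, Complex.mul_im, pow_two] at him hre
  -- him : A * A * (exp(-(4Ry)) * sin(4Rx)) = -(4*(x*y + y*x))
  -- hre : A * A * (exp(-(4Ry)) * cos(4Rx)) = -(4*(x*x - y*y - B*B))
  obtain ⟨E, hEdef⟩ : ∃ E, Real.exp (-(4*R*y)) = E := ⟨_, rfl⟩
  rw [hEdef] at him hre
  have hEpos : 0 < E := hEdef ▸ Real.exp_pos _
  have hE1 : E ≤ 1 := hEdef ▸ Real.exp_le_one_iff.mpr (by nlinarith)
  have hx2 : 0 < x * x := by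
    rcases hx.lt_or_gt with h | h
    · exact mul_pos_of_neg_of_neg h h
    · exact mul_pos h h
  -- Step 1: x * sin(4Rx) < 0
  have hxsin : x * Real.sin (4*R*x) < 0 := by
    have h8 : A*A*E*(x*Real.sin (4*R*x)) = -(8*(x*x)*y) := by linear_combination x * him
    nlinarith [mul_pos (mul_pos (mul_pos hA hA) hEpos) hy, mul_pos hx2 hy]
  -- Step 2: R > 0
  have hRpos : 0 < R := by
    rcases hR.eq_or_lt with h | h
    · exfalso; rw [← h] at hxsin; simp at hxsin
    · exact h
  -- Step 3: π < 4R|x|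
  have hpi : Real.pi < 4*R*|x| := by
    have := aux_pi_lt_abs (4*R*x) (by nlinarith)
    calc Real.pi < |4*R*x| := this
    _ = 4*R*|x| := by rw [abs_mul, abs_of_pos (by linarith : (0:ℝ) < 4*R)]
  -- Step 4: x² > B² + A²/4
  have hN : (0:ℝ) < 4*B^2 + A^2 := by positivity
  have hsq : Real.sqrt (4*B^2+A^2) > 0 := Real.sqrt_pos.mpr hN
  have hRs : R * (2*Real.sqrt (4*B^2+A^2)) ≤ Real.pi := by
    rw [le_div_iff₀ (by positivity)] at hRle
    linarith
  have habs : Real.sqrt (4*B^2+A^2)/2 < |x| := by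
    nlinarith [abs_nonneg x]
  have h5 : (Real.sqrt (4*B^2+A^2)/2) * (Real.sqrt (4*B^2+A^2)/2) < |x| * |x| :=
    mul_self_lt_mul_self (by positivity) habs
  rw [abs_mul_abs_self] at h5
  have hs2 : Real.sqrt (4*B^2+A^2) * Real.sqrt (4*B^2+A^2) = 4*B^2+A^2 :=
    Real.mul_self_sqrt hN.le
  have hxB : x*x > B*B + A*A/4 := by nlinarith
  -- Step 5: modulus equation
  have hmod : (A*A*E)^2 = (4*(x*x - y*y - B*B))^2 + (8*x*y)^2 := by
    have hpy := Real.sin_sq_add_cos_sq (4*R*x)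
    linear_combination (A*A*E*Real.sin (4*R*x) + -(8*x*y)) * him +
      (A*A*E*Real.cos (4*R*x) + -(4*(x*x-y*y-B*B))) * hre - (A*A*E)^2 * hpy
  -- Final contradiction
  have hE2 : E^2 ≤ 1 := by nlinarith
  have h1 : (A*A*E)^2 ≤ (A*A)^2 := by
    calc (A*A*E)^2 = (A*A)^2 * E^2 := by ring
    _ ≤ (A*A)^2 * 1 := by nlinarith [sq_nonneg (A*A)]
    _ = (A*A)^2 := by ring
  have hw : A*A/4 < x*x - B*B := by linarith
  have hw2 : (A*A/4)*(A*A/4) < (x*x-B*B)*(x*x-B*B) :=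
    mul_self_lt_mul_self (by positivity) hw
  have h2 : (A*A)^2 < (4*(x*x - y*y - B*B))^2 + (8*x*y)^2 := by
    nlinarith [hw2, mul_pos hx2 (mul_pos hy hy),
      mul_pos (mul_pos hy hy) (mul_pos hy hy), sq_nonneg (B*y)]
  linarith
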